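/- Let f : ℝ → ℝ be continuously differentiable with compact support, and define the radial function u : ℝ⁴ → ℝ by u(x) = f(|x|). Then for every x ∈ ℝ⁴, |x|³·u(x)² ≤ (1/π²)·(∫_{ℝ⁴} u² dy)^{1/2}·(∫_{ℝ⁴} |∇u(y)|² dy)^{1/2}. -/

import Mathlib

open MeasureTheory Set

namespace RadialSobolevAux

lemma mul_sqrt_nonneg (s : ℝ) : 0 ≤ s * Real.sqrt s := by
  rcases le_or_gt 0 s with h | h
  · positivity
  · rw [Real.sqrt_eq_zero'.mpr h.le, mul_zero]


lemma polar4 (g : ℝ → ℝ) :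
    ∫ y : EuclideanSpace ℝ (Fin 4), g ‖y‖ =
      2 * Real.pi ^ 2 * ∫ s in Ioi (0:ℝ), s ^ 3 * g s := by
  have h := MeasureTheory.integral_fun_norm_addHaar
    (volume : Measure (EuclideanSpace ℝ (Fin 4))) g
  rw [h]
  have hdim : Module.finrank ℝ (EuclideanSpace ℝ (Fin 4)) = 4 := by
    simp [finrank_euclideanSpace]
  have hball : (volume (Metric.ball (0 : EuclideanSpace ℝ (Fin 4)) 1)).toReal
      = Real.pi ^ 2 / 2 := by
    rw [EuclideanSpace.volume_ball]
    have h3 : ((Fintype.card (Fin 4) : ℝ) / 2 + 1) = (3 : ℝ) := by norm_num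
    rw [Fintype.card_fin] at h3 ⊢
    rw [h3]
    have hg : Real.Gamma 3 = 2 := by
      rw [show (3:ℝ) = (2:ℕ) + 1 by norm_num, Real.Gamma_nat_eq_factorial]
      norm_num
    rw [hg, ENNReal.toReal_mul, ENNReal.toReal_pow,
      ENNReal.toReal_ofReal (by norm_num : (0:ℝ) ≤ 1),
      ENNReal.toReal_ofReal (by positivity)]
    have hs : Real.sqrt Real.pi ^ 4 = Real.pi ^ 2 := by
      rw [show 4 = 2 * 2 from rfl, pow_mul, Real.sq_sqrt Real.pi_nonneg]
    rw [hs]; ring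
  rw [hdim, measureReal_def, hball]
  rw [nsmul_eq_mul, smul_eq_mul]
  rw [show (∫ y in Ioi (0:ℝ), y ^ (4-1) • g y) = ∫ s in Ioi (0:ℝ), s ^ 3 * g s from by
    simp [smul_eq_mul]]
  ring


lemma norm_fderiv_norm_eq_one {y : EuclideanSpace ℝ (Fin 4)} (hy : y ≠ 0) :
    HasFDerivAt (fun x : EuclideanSpace ℝ (Fin 4) => ‖x‖)
      (fderiv ℝ (fun x : EuclideanSpace ℝ (Fin 4) => ‖x‖) y) y ∧
    ‖fderiv ℝ (fun x : EuclideanSpace ℝ (Fin 4) => ‖x‖) y‖ = 1 := by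
  have hdiff : DifferentiableAt ℝ (fun x : EuclideanSpace ℝ (Fin 4) => ‖x‖) y :=
    ((contDiffAt_norm ℝ hy).differentiableAt one_ne_zero)
  set D := fderiv ℝ (fun x : EuclideanSpace ℝ (Fin 4) => ‖x‖) y with hD
  have hDd : HasFDerivAt (fun x : EuclideanSpace ℝ (Fin 4) => ‖x‖) D y := hdiff.hasFDerivAt
  refine ⟨hDd, le_antisymm ?_ ?_⟩
  · have := norm_fderiv_le_of_lipschitz ℝ (f := fun x : EuclideanSpace ℝ (Fin 4) => ‖x‖)
      (x₀ := y) lipschitzWith_one_norm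
    simpa using this
  · -- D y = ‖y‖
    have hc : HasDerivAt (fun t : ℝ => t • y) y 1 := by
      simpa using (hasDerivAt_id (1:ℝ)).smul_const y
    have hcomp : HasDerivAt (fun t : ℝ => ‖t • y‖) (D y) 1 := by
      have hDd' : HasFDerivAt (fun x : EuclideanSpace ℝ (Fin 4) => ‖x‖) D ((1:ℝ) • y) := by
        simpa using hDd
      exact hDd'.comp_hasDerivAt (1:ℝ) hc
    have heq : (fun t : ℝ => ‖t • y‖) =ᶠ[nhds (1:ℝ)] fun t => t * ‖y‖ := by
      filter_upwards [eventually_gt_nhds (by norm_num : (0:ℝ) < 1)] with t ht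
      rw [norm_smul, Real.norm_eq_abs, abs_of_pos ht]
    have hcomp2 : HasDerivAt (fun t : ℝ => t * ‖y‖) (D y) 1 := hcomp.congr_of_eventuallyEq heq.symm
    have h2 : D y = ‖y‖ := by
      have := hcomp2.deriv
      simpa using this.symm
    have hpos : (0:ℝ) < ‖y‖ := norm_pos_iff.mpr hy
    have hle : ‖y‖ ≤ ‖D‖ * ‖y‖ := by
      calc ‖y‖ = ‖D y‖ := by rw [h2, Real.norm_eq_abs, abs_of_pos hpos]
      _ ≤ ‖D‖ * ‖y‖ := D.le_opNorm y
    exact le_of_mul_le_mul_right (by linarith) hpos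

lemma norm_fderiv_radial (f : ℝ → ℝ) (hf : ContDiff ℝ 1 f)
    {y : EuclideanSpace ℝ (Fin 4)} (hy : y ≠ 0) :
    ‖fderiv ℝ (fun x : EuclideanSpace ℝ (Fin 4) => f ‖x‖) y‖ = |deriv f ‖y‖| := by
  obtain ⟨hDd, hDn⟩ := norm_fderiv_norm_eq_one hy
  have hd : HasDerivAt f (deriv f ‖y‖) ‖y‖ :=
    ((hf.differentiable one_ne_zero) ‖y‖).hasDerivAt
  have hcomp := hd.comp_hasFDerivAt y hDd
  rw [show (fun x : EuclideanSpace ℝ (Fin 4) => f ‖x‖) = f ∘ (fun x => ‖x‖) from rfl,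
    hcomp.fderiv, norm_smul, Real.norm_eq_abs, hDn, mul_one]


lemma oneD (f : ℝ → ℝ) (hf : ContDiff ℝ 1 f) (hfsupp : HasCompactSupport f)
    (r : ℝ) (hr : 0 ≤ r) :
    r ^ 3 * f r ^ 2 ≤ 2 * ∫ s in Ioi (0:ℝ), s ^ 3 * |f s| * |deriv f s| := by
  have hf' : Continuous (deriv f) := hf.continuous_deriv le_rfl
  have hfc : Continuous f := hf.continuous
  have hd : ∀ s : ℝ, HasDerivAt f (deriv f s) s :=
    fun s => ((hf.differentiable one_ne_zero) s).hasDerivAt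
  -- choose R beyond the support
  obtain ⟨R₀, hR₀⟩ := (hfsupp.isBounded).subset_closedBall 0
  set R : ℝ := max r R₀ + 1 with hRdef
  have hrR : r ≤ R := le_trans (le_max_left _ _) (by linarith)
  have hfR : f R = 0 := by
    apply image_eq_zero_of_notMem_tsupport
    intro hmem
    have := hR₀ hmem
    simp only [Metric.mem_closedBall, dist_zero_right, Real.norm_eq_abs] at this
    have h1 : R₀ ≤ max r R₀ := le_max_right _ _
    have h2 : |R| = R := abs_of_pos (by positivity)
    linarith [this.trans h1, h2 ▸ this]
  -- FTC
  set F' : ℝ → ℝ := fun s => 3 * s ^ 2 * f s ^ 2 + s ^ 3 * (2 * f s * deriv f s) with hF'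
  have hFd : ∀ s ∈ Set.uIcc r R, HasDerivAt (fun t => t ^ 3 * f t ^ 2) (F' s) s := by
    intro s _
    have h1 : HasDerivAt (fun t => t ^ 3 * f t ^ 2) _ s := (hasDerivAt_pow 3 s).mul ((hd s).pow 2)
    convert h1 using 1
    simp only [hF', Pi.pow_apply]
    norm_num
  have hF'c : Continuous F' := by fun_prop
  have hFTC := intervalIntegral.integral_eq_sub_of_hasDerivAt hFd
    (hF'c.intervalIntegrable r R)
  rw [hfR] at hFTC
  have key : r ^ 3 * f r ^ 2 = ∫ s in r..R, -F' s := by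
    rw [intervalIntegral.integral_neg, hFTC]; ring
  -- bound the interval integral
  have hmono : (∫ s in r..R, -F' s) ≤ ∫ s in r..R, 2 * (s ^ 3 * |f s| * |deriv f s|) := by
    apply intervalIntegral.integral_mono_on hrR
    · exact (hF'c.neg).intervalIntegrable r R
    · exact (by fun_prop : Continuous fun s => 2 * (s ^ 3 * |f s| * |deriv f s|)).intervalIntegrable r R
    · intro s hs
      have hs0 : 0 ≤ s := le_trans hr hs.1
      have habs : -(f s * deriv f s) ≤ |f s| * |deriv f s| := by
        rw [← abs_mul]; exact neg_le_abs _
      have hs3 : 0 ≤ s ^ 3 := by positivity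
      simp only [hF']
      nlinarith [sq_nonneg (s * f s), mul_le_mul_of_nonneg_left habs hs3, sq_nonneg s, sq_nonneg (f s), mul_nonneg (mul_nonneg hs0 hs0) (sq_nonneg (f s))]
  -- extend to Ioi 0
  have hGint : IntegrableOn (fun s => s ^ 3 * |f s| * |deriv f s|) (Ioi (0:ℝ)) := by
    apply Continuous.integrable_of_hasCompactSupport (by fun_prop)
      (hfsupp.mono ?_) |>.integrableOn
    intro s hs
    simp only [Function.mem_support] at hs ⊢
    intro h0
    simp [h0] at hs
  have hsub : (∫ s in r..R, s ^ 3 * |f s| * |deriv f s|) ≤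
      ∫ s in Ioi (0:ℝ), s ^ 3 * |f s| * |deriv f s| := by
    rw [intervalIntegral.integral_of_le hrR]
    apply setIntegral_mono_set hGint
    · filter_upwards [self_mem_ae_restrict measurableSet_Ioi] with s hs
      have : (0:ℝ) < s := hs
      positivity
    · filter_upwards with s hs
      exact lt_of_le_of_lt hr hs.1
  calc r ^ 3 * f r ^ 2 = ∫ s in r..R, -F' s := key
    _ ≤ ∫ s in r..R, 2 * (s ^ 3 * |f s| * |deriv f s|) := hmono
    _ = 2 * ∫ s in r..R, s ^ 3 * |f s| * |deriv f s| := by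
        rw [intervalIntegral.integral_const_mul]
    _ ≤ 2 * ∫ s in Ioi (0:ℝ), s ^ 3 * |f s| * |deriv f s| := by linarith



lemma csineq (f : ℝ → ℝ) (hf : ContDiff ℝ 1 f) (hfsupp : HasCompactSupport f) :
    (∫ s in Ioi (0:ℝ), s ^ 3 * |f s| * |deriv f s|) ≤
      Real.sqrt (∫ s in Ioi (0:ℝ), s ^ 3 * f s ^ 2) *
      Real.sqrt (∫ s in Ioi (0:ℝ), s ^ 3 * deriv f s ^ 2) := by
  have hfc : Continuous f := hf.continuous
  have hf'c : Continuous (deriv f) := hf.continuous_deriv le_rfl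
  set A : ℝ → ℝ := fun s => s * Real.sqrt s * |f s| with hA
  set B : ℝ → ℝ := fun s => s * Real.sqrt s * |deriv f s| with hB
  have hAc : Continuous A := by fun_prop
  have hBc : Continuous B := by fun_prop
  have hAsupp : HasCompactSupport A := hfsupp.mono (by
    intro s hs; simp only [Function.mem_support, hA] at hs ⊢
    intro h0; simp [h0] at hs)
  have hBsupp : HasCompactSupport B := (hfsupp.deriv).mono (by
    intro s hs; simp only [Function.mem_support, hB] at hs ⊢
    intro h0; simp [h0] at hs)
  have hpq : Real.HolderConjugate 2 2 := Real.HolderConjugate.two_two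
  have hAm : MemLp A (ENNReal.ofReal 2) (volume.restrict (Ioi (0:ℝ))) :=
    (hAc.memLp_of_hasCompactSupport hAsupp).restrict _
  have hBm : MemLp B (ENNReal.ofReal 2) (volume.restrict (Ioi (0:ℝ))) :=
    (hBc.memLp_of_hasCompactSupport hBsupp).restrict _
  have hH := integral_mul_le_Lp_mul_Lq_of_nonneg hpq
    (Filter.Eventually.of_forall fun s => mul_nonneg (mul_sqrt_nonneg s) (abs_nonneg _))
    (Filter.Eventually.of_forall fun s => mul_nonneg (mul_sqrt_nonneg s) (abs_nonneg _)) hAm hBm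
  have hAB : (∫ s in Ioi (0:ℝ), A s * B s) = ∫ s in Ioi (0:ℝ), s ^ 3 * |f s| * |deriv f s| := by
    apply setIntegral_congr_fun measurableSet_Ioi
    intro s hs
    have h : Real.sqrt s ^ 2 = s := Real.sq_sqrt (le_of_lt hs)
    simp only [hA, hB]
    linear_combination (s^2 * |f s| * |deriv f s|) * h
  have hA2 : (∫ s in Ioi (0:ℝ), A s ^ (2:ℝ)) = ∫ s in Ioi (0:ℝ), s ^ 3 * f s ^ 2 := by
    apply setIntegral_congr_fun measurableSet_Ioi
    intro s hs
    have h : Real.sqrt s ^ 2 = s := Real.sq_sqrt (le_of_lt hs)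
    simp only [hA, Real.rpow_two]
    linear_combination (s^2 * |f s|^2) * h + s^3 * (sq_abs (f s))
  have hB2 : (∫ s in Ioi (0:ℝ), B s ^ (2:ℝ)) = ∫ s in Ioi (0:ℝ), s ^ 3 * deriv f s ^ 2 := by
    apply setIntegral_congr_fun measurableSet_Ioi
    intro s hs
    have h : Real.sqrt s ^ 2 = s := Real.sq_sqrt (le_of_lt hs)
    simp only [hB, Real.rpow_two]
    linear_combination (s^2 * |deriv f s|^2) * h + s^3 * (sq_abs (deriv f s))
  rw [hAB, hA2, hB2] at hH
  calc (∫ s in Ioi (0:ℝ), s ^ 3 * |f s| * |deriv f s|)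
      ≤ (∫ s in Ioi (0:ℝ), s ^ 3 * f s ^ 2) ^ ((1:ℝ)/2) *
        (∫ s in Ioi (0:ℝ), s ^ 3 * deriv f s ^ 2) ^ ((1:ℝ)/2) := hH
    _ = _ := by rw [← Real.sqrt_eq_rpow, ← Real.sqrt_eq_rpow]

end RadialSobolevAux

open RadialSobolevAux in
/-- Radial Sobolev (Strauss) inequality in dimension 4: if `u(x) = f(|x|)` with `f` a `C¹`
compactly supported function, then for every `x`,
`|x|³ u(x)² ≤ (1/π²) ‖u‖_{L²} ‖∇u‖_{L²}`. -/
theorem radial_sobolev_4d (f : ℝ → ℝ) (hf : ContDiff ℝ 1 f)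
    (hfsupp : HasCompactSupport f)
    (u : EuclideanSpace ℝ (Fin 4) → ℝ) (hu : u = fun x => f ‖x‖) :
    ∀ x : EuclideanSpace ℝ (Fin 4),
      ‖x‖ ^ 3 * u x ^ 2 ≤
        1 / Real.pi ^ 2 * Real.sqrt (∫ y, u y ^ 2) *
          Real.sqrt (∫ y, ‖fderiv ℝ u y‖ ^ 2) := by
  subst hu
  intro x
  set I1 : ℝ := ∫ s in Ioi (0:ℝ), s ^ 3 * f s ^ 2 with hI1
  set I2 : ℝ := ∫ s in Ioi (0:ℝ), s ^ 3 * deriv f s ^ 2 with hI2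
  have hI1n : 0 ≤ I1 := setIntegral_nonneg measurableSet_Ioi fun s hs => by
    have : (0:ℝ) < s := hs; positivity
  have hI2n : 0 ≤ I2 := setIntegral_nonneg measurableSet_Ioi fun s hs => by
    have : (0:ℝ) < s := hs; positivity
  have e1 : (∫ y : EuclideanSpace ℝ (Fin 4), (fun x => f ‖x‖) y ^ 2) = 2 * Real.pi ^ 2 * I1 := by
    simpa using polar4 (fun t => f t ^ 2)
  have e2 : (∫ y : EuclideanSpace ℝ (Fin 4), ‖fderiv ℝ (fun x => f ‖x‖) y‖ ^ 2)
      = 2 * Real.pi ^ 2 * I2 := by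
    have h0 : ∀ᵐ y : EuclideanSpace ℝ (Fin 4), y ≠ 0 := by
      rw [MeasureTheory.ae_iff]
      simp [measure_singleton]
    have hcongr : (∫ y : EuclideanSpace ℝ (Fin 4), ‖fderiv ℝ (fun x => f ‖x‖) y‖ ^ 2)
        = ∫ y : EuclideanSpace ℝ (Fin 4), (fun t => deriv f t ^ 2) ‖y‖ := by
      apply integral_congr_ae
      filter_upwards [h0] with y hy
      rw [norm_fderiv_radial f hf hy, sq_abs]
    rw [hcongr]
    simpa using polar4 (fun t => deriv f t ^ 2)
  rw [e1, e2]
  have hr : (0:ℝ) ≤ ‖x‖ := norm_nonneg x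
  have step1 := oneD f hf hfsupp ‖x‖ hr
  have step2 := csineq f hf hfsupp
  have hπ : Real.pi ≠ 0 := Real.pi_ne_zero
  have hs1 : Real.sqrt (2 * Real.pi ^ 2 * I1)
      = Real.sqrt (2 * Real.pi ^ 2) * Real.sqrt I1 := Real.sqrt_mul (by positivity) _
  have hs2 : Real.sqrt (2 * Real.pi ^ 2 * I2)
      = Real.sqrt (2 * Real.pi ^ 2) * Real.sqrt I2 := Real.sqrt_mul (by positivity) _
  have hss : Real.sqrt (2 * Real.pi ^ 2) * Real.sqrt (2 * Real.pi ^ 2) = 2 * Real.pi ^ 2 :=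
    Real.mul_self_sqrt (by positivity)
  have hrhs : 1 / Real.pi ^ 2 * Real.sqrt (2 * Real.pi ^ 2 * I1) *
      Real.sqrt (2 * Real.pi ^ 2 * I2) = 2 * (Real.sqrt I1 * Real.sqrt I2) := by
    rw [hs1, hs2]
    calc 1 / Real.pi ^ 2 * (Real.sqrt (2 * Real.pi ^ 2) * Real.sqrt I1) *
          (Real.sqrt (2 * Real.pi ^ 2) * Real.sqrt I2)
        = Real.sqrt (2 * Real.pi ^ 2) * Real.sqrt (2 * Real.pi ^ 2) *
            (Real.sqrt I1 * Real.sqrt I2) * (1 / Real.pi ^ 2) := by ring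
      _ = 2 * Real.pi ^ 2 * (Real.sqrt I1 * Real.sqrt I2) * (1 / Real.pi ^ 2) := by rw [hss]
      _ = 2 * (Real.sqrt I1 * Real.sqrt I2) := by field_simp
  rw [hrhs]
  calc ‖x‖ ^ 3 * f ‖x‖ ^ 2
      ≤ 2 * ∫ s in Ioi (0:ℝ), s ^ 3 * |f s| * |deriv f s| := step1
    _ ≤ 2 * (Real.sqrt I1 * Real.sqrt I2) := by
        have := mul_le_mul_of_nonneg_left step2 (by norm_num : (0:ℝ) ≤ 2)
        simpa [hI1, hI2, mul_assoc] using this
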